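/- arXiv:2011.07244 — 4 statements merged into one kernel-verified Lean document; each statement's English description precedes it below -/
import Mathlib

section
/- Let R ∈ [0.21132, 0.22803] and a = (1−R)². Define G(x) = sin²(x) + cos(x)·√(a − sin²(x)). Then for all x ∈ [0, π/6], 1 − R − R²x²/(2(1−R)) − 0.05 x⁴ ≤ G(x) ≤ 1 − R − R²x²/(2(1−R)) − 0.02 x⁴. -/
open Real Set

lemma glow (R X : ℝ) (hR1 : (0.21132:ℝ) ≤ R) (hR2 : R ≤ 0.22803)
    (hX0 : 0 ≤ X) (hX : X ≤ 0.2742) :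
    0 ≤ 1.08*(1-R)^2*R^2 + 0.4*(1-R)^3 - 4*(1-R)*(1-0.27*X)*(R^2+0.1*(1-R)*X)
      - (R^2+0.1*(1-R)*X)^2 := by
  nlinarith [sq_nonneg (R-0.22803), sq_nonneg (X-0.2742), mul_nonneg hX0 (sub_nonneg.2 hX),
    mul_nonneg (sub_nonneg.2 hR1) (sub_nonneg.2 hR2), sq_nonneg (R-0.21132), sq_nonneg R,
    mul_nonneg (mul_nonneg hX0 hX0) (sub_nonneg.2 hR2),
    mul_nonneg (sub_nonneg.2 hR1) (sub_nonneg.2 hX),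
    mul_nonneg (sub_nonneg.2 hR2) (sub_nonneg.2 hX)]

lemma ghigh (R X : ℝ) (hR1 : (0.21132:ℝ) ≤ R) (hR2 : R ≤ 0.22803)
    (hX0 : 0 ≤ X) (hX : X ≤ 0.2742) :
    1.552*(1-R)^2*R^2 + 0.16*(1-R)^3 - 4*(1-R)*(1-0.388*X)*(R^2+0.04*(1-R)*X)
      - (R^2+0.04*(1-R)*X)^2 ≤ 0 := by
  nlinarith [sq_nonneg (R-0.21132), sq_nonneg (X-0.2742), mul_nonneg hX0 (sub_nonneg.2 hX),
    mul_nonneg (sub_nonneg.2 hR1) (sub_nonneg.2 hR2), sq_nonneg R,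
    mul_nonneg (mul_nonneg hX0 hX0) (sub_nonneg.2 hR2),
    mul_nonneg (sub_nonneg.2 hR1) (sub_nonneg.2 hX),
    mul_nonneg (sub_nonneg.2 hR2) (sub_nonneg.2 hX)]

lemma key_lower (R x s u : ℝ) (hR1 : (0.21132:ℝ) ≤ R) (hR2 : R ≤ 0.22803)
    (hx0 : 0 ≤ x) (hx2 : x ^ 2 ≤ 0.2742)
    (hsu : s = x ^ 2 - u)
    (hu1 : 0.27 * x ^ 4 ≤ u) (hu2 : u ≤ 0.388 * x ^ 4) :
    (2*(1-R)^2 - 2*(1-R)*s - R^2*x^2 - 0.1*(1-R)*x^4) ^ 2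
      ≤ (2*(1-R))^2 * ((1 - s) * ((1 - R) ^ 2 - s)) := by
  have hg := glow R (x^2) hR1 hR2 (sq_nonneg x) hx2
  have hC : 0 ≤ 4*(1-R)^2*R^2 + 4*(1-R)*(R^2*x^2 + 0.1*(1-R)*x^4) := by
    have hb : (0:ℝ) ≤ 1 - R := by linarith
    have h4 : (0:ℝ) ≤ x^4 := by positivity
    nlinarith [sq_nonneg R, sq_nonneg x, mul_nonneg hb (mul_nonneg (sq_nonneg R) (sq_nonneg x)),
      mul_nonneg (mul_nonneg hb hb) h4]
  nlinarith [mul_nonneg hg (sq_nonneg (x^2)), mul_nonneg hC (by nlinarith : (0:ℝ) ≤ u - 0.27*x^4)]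

lemma key_upper (R x s u : ℝ) (hR1 : (0.21132:ℝ) ≤ R) (hR2 : R ≤ 0.22803)
    (hx0 : 0 ≤ x) (hx2 : x ^ 2 ≤ 0.2742)
    (hsu : s = x ^ 2 - u)
    (hu1 : 0.27 * x ^ 4 ≤ u) (hu2 : u ≤ 0.388 * x ^ 4) :
    (2*(1-R))^2 * ((1 - s) * ((1 - R) ^ 2 - s))
      ≤ (2*(1-R)^2 - 2*(1-R)*s - R^2*x^2 - 0.04*(1-R)*x^4) ^ 2 := by
  have hg := ghigh R (x^2) hR1 hR2 (sq_nonneg x) hx2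
  have hC : 0 ≤ 4*(1-R)^2*R^2 + 4*(1-R)*(R^2*x^2 + 0.04*(1-R)*x^4) := by
    have hb : (0:ℝ) ≤ 1 - R := by linarith
    have h4 : (0:ℝ) ≤ x^4 := by positivity
    nlinarith [sq_nonneg R, sq_nonneg x, mul_nonneg hb (mul_nonneg (sq_nonneg R) (sq_nonneg x)),
      mul_nonneg (mul_nonneg hb hb) h4]
  nlinarith [mul_nonneg (neg_nonneg.2 hg) (sq_nonneg (x^2)),
    mul_nonneg hC (by nlinarith : (0:ℝ) ≤ 0.388*x^4 - u)]

set_option maxHeartbeats 1000000 in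
/-- Bounds for `G(x) = sin²x + cos x √(a − sin²x)`, `a = (1−R)²`,
for `R ∈ [0.21132, 0.22803]` and `x ∈ [0, π/6]`. -/
theorem G_bounds (R : ℝ) (hR : R ∈ Set.Icc (0.21132 : ℝ) 0.22803)
    (a : ℝ) (ha : a = (1 - R) ^ 2)
    (G : ℝ → ℝ)
    (hG : ∀ x, G x = Real.sin x ^ 2 + Real.cos x * Real.sqrt (a - Real.sin x ^ 2)) :
    ∀ x ∈ Set.Icc (0 : ℝ) (Real.pi / 6),
      1 - R - R ^ 2 * x ^ 2 / (2 * (1 - R)) - 0.05 * x ^ 4 ≤ G x ∧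
      G x ≤ 1 - R - R ^ 2 * x ^ 2 / (2 * (1 - R)) - 0.02 * x ^ 4 := by
  obtain ⟨hR1, hR2⟩ := hR
  intro x hx
  obtain ⟨hx0, hx6⟩ := hx
  have hpi := Real.pi_lt_d6
  have hpi0 := Real.pi_pos
  have hb : (0:ℝ) < 1 - R := by linarith
  have hxu : x ≤ 0.5236 := by nlinarith
  have hx2 : x ^ 2 ≤ 0.2742 := by nlinarith
  have hx4 : x ^ 4 ≤ 0.0752 := by nlinarith [sq_nonneg x]
  have hx40 : (0:ℝ) ≤ x ^ 4 := by positivity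
  have h45 : 0 ≤ x ^ 4 * (0.5236 - x) := by
    apply mul_nonneg hx40; linarith
  have h56 : 0 ≤ x ^ 5 * (0.5236 - x) := by
    apply mul_nonneg (by positivity); linarith
  have h67 : 0 ≤ x ^ 6 * (0.5236 - x) := by
    apply mul_nonneg (by positivity); linarith
  have h78 : 0 ≤ x ^ 7 * (0.5236 - x) := by
    apply mul_nonneg (by positivity); linarith
  have h8 : (0:ℝ) ≤ x ^ 8 := by positivity
  have hu_lb : 0.27 * x ^ 4 ≤ x ^ 4 / 3 - x ^ 6 / 36 - 2 * (x * (x ^ 4 * (5 / 96)))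
      - (x ^ 4 * (5 / 96)) ^ 2 := by nlinarith [h45, h56, h67, h78, h8]
  have hu_ub : x ^ 4 / 3 - x ^ 6 / 36 + 2 * (x * (x ^ 4 * (5 / 96))) ≤ 0.388 * x ^ 4 := by
    nlinarith [h45, h56, h67, h78, h8]
  -- bounds on u = x^2 - sin^2 x via the cubic Taylor approximation of sin
  have hsin_b : |Real.sin x - (x - x ^ 3 / 6)| ≤ |x| ^ 4 * (5 / 96) :=
    by
      have h := Real.sin_bound (by rw [abs_of_nonneg hx0]; linarith : |x| ≤ 1)
      rw [abs_of_nonneg hx0] at h ⊢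
      nlinarith [mul_nonneg hx40 (by linarith : (0:ℝ) ≤ 5 / 96 - x / 100)]
  rw [abs_of_nonneg hx0] at hsin_b
  obtain ⟨hr1, hr2⟩ := abs_le.mp hsin_b
  set r : ℝ := Real.sin x - (x - x ^ 3 / 6) with hr_def
  have hsin_eq : Real.sin x = x - x ^ 3 / 6 + r := by rw [hr_def]; ring
  set s := Real.sin x ^ 2 with hs_def
  have hs0 : 0 ≤ s := sq_nonneg _
  set u := x ^ 2 - s with hu_def
  have hsu : s = x ^ 2 - u := by rw [hu_def]; ring
  clear_value r s u
  have hA : 0 ≤ x - x ^ 3 / 6 := by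
    nlinarith [mul_nonneg hx0 (by linarith : (0:ℝ) ≤ 0.2742 - x ^ 2)]
  have hr_sq : r ^ 2 ≤ (x ^ 4 * (5 / 96)) ^ 2 := sq_le_sq' hr1 hr2
  have hcross : (x - x ^ 3 / 6) * r ≤ x * (x ^ 4 * (5 / 96)) := by
    calc (x - x ^ 3 / 6) * r ≤ (x - x ^ 3 / 6) * (x ^ 4 * (5 / 96)) :=
          mul_le_mul_of_nonneg_left hr2 hA
      _ ≤ x * (x ^ 4 * (5 / 96)) := by
          linarith [mul_nonneg (by positivity : (0:ℝ) ≤ x ^ 3 / 6)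
            (by positivity : (0:ℝ) ≤ x ^ 4 * (5 / 96))]
  have hcross' : -(x * (x ^ 4 * (5 / 96))) ≤ (x - x ^ 3 / 6) * r := by
    have h1 : -(x * (x ^ 4 * (5 / 96))) ≤ (x - x ^ 3 / 6) * (-(x ^ 4 * (5 / 96))) := by
      linarith [mul_nonneg (by positivity : (0:ℝ) ≤ x ^ 3 / 6)
        (by positivity : (0:ℝ) ≤ x ^ 4 * (5 / 96))]
    calc -(x * (x ^ 4 * (5 / 96))) ≤ (x - x ^ 3 / 6) * (-(x ^ 4 * (5 / 96))) := h1
      _ ≤ (x - x ^ 3 / 6) * r := mul_le_mul_of_nonneg_left (by linarith) hA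
  have hu_expand : u = x ^ 4 / 3 - x ^ 6 / 36 - 2 * ((x - x ^ 3 / 6) * r) - r ^ 2 := by
    rw [hu_def, hs_def, hsin_eq]; ring
  have hu1 : 0.27 * x ^ 4 ≤ u := by
    rw [hu_expand]; linarith [hr_sq, hcross, hu_lb]
  have hu2 : u ≤ 0.388 * x ^ 4 := by
    rw [hu_expand]; linarith [sq_nonneg r, hcross', hu_ub]
  have hsx2 : s ≤ x ^ 2 := by
    have h4 : (0:ℝ) ≤ x ^ 4 := by positivity
    rw [hsu]; nlinarith
  -- rewrite G
  have hc0 : 0 ≤ Real.cos x :=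
    Real.cos_nonneg_of_mem_Icc ⟨by linarith, by linarith⟩
  have hGx : G x = s + Real.sqrt ((1 - s) * (a - s)) := by
    rw [hG x, ← hs_def]
    congr 1
    rw [hs_def, ← Real.cos_sq', Real.sqrt_mul (sq_nonneg _), Real.sqrt_sq hc0]
  rw [ha] at hGx
  have h2b : (0:ℝ) < (2 * (1 - R)) ^ 2 := by positivity
  constructor
  · -- lower bound
    set N : ℝ := 2*(1-R)^2 - 2*(1-R)*s - R^2*x^2 - 0.1*(1-R)*x^4 with hN_def
    have hN0 : 0 ≤ N := by rw [hN_def]; nlinarith [sq_nonneg x]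
    have hkey := key_lower R x s u hR1 hR2 hx0 hx2 hsu hu1 hu2
    have h1 : (N / (2 * (1 - R))) ^ 2 ≤ (1 - s) * ((1 - R) ^ 2 - s) := by
      rw [div_pow, div_le_iff₀ h2b]
      calc N ^ 2 ≤ (2*(1-R))^2 * ((1 - s) * ((1 - R) ^ 2 - s)) := hkey
        _ = (1 - s) * ((1 - R) ^ 2 - s) * (2 * (1 - R)) ^ 2 := by ring
    have h2 : N / (2 * (1 - R)) ≤ Real.sqrt ((1 - s) * ((1 - R) ^ 2 - s)) := by
      calc N / (2 * (1 - R)) = Real.sqrt ((N / (2 * (1 - R))) ^ 2) :=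
            (Real.sqrt_sq (div_nonneg hN0 (by linarith))).symm
        _ ≤ _ := Real.sqrt_le_sqrt h1
    have hEq : 1 - R - R ^ 2 * x ^ 2 / (2 * (1 - R)) - 0.05 * x ^ 4 = s + N / (2 * (1 - R)) := by
      rw [hN_def]; field_simp; ring
    rw [hGx, hEq]; linarith
  · -- upper bound
    set N : ℝ := 2*(1-R)^2 - 2*(1-R)*s - R^2*x^2 - 0.04*(1-R)*x^4 with hN_def
    have hN0 : 0 ≤ N := by rw [hN_def]; nlinarith [sq_nonneg x]
    have hkey := key_upper R x s u hR1 hR2 hx0 hx2 hsu hu1 hu2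
    have h1 : (1 - s) * ((1 - R) ^ 2 - s) ≤ (N / (2 * (1 - R))) ^ 2 := by
      rw [div_pow, le_div_iff₀ h2b]
      calc (1 - s) * ((1 - R) ^ 2 - s) * (2 * (1 - R)) ^ 2
          = (2*(1-R))^2 * ((1 - s) * ((1 - R) ^ 2 - s)) := by ring
        _ ≤ N ^ 2 := hkey
    have h2 : Real.sqrt ((1 - s) * ((1 - R) ^ 2 - s)) ≤ N / (2 * (1 - R)) := by
      calc Real.sqrt ((1 - s) * ((1 - R) ^ 2 - s))
          ≤ Real.sqrt ((N / (2 * (1 - R))) ^ 2) := Real.sqrt_le_sqrt h1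
        _ = N / (2 * (1 - R)) := Real.sqrt_sq (div_nonneg hN0 (by linarith))
    have hEq : 1 - R - R ^ 2 * x ^ 2 / (2 * (1 - R)) - 0.02 * x ^ 4 = s + N / (2 * (1 - R)) := by
      rw [hN_def]; field_simp; ring
    rw [hGx, hEq]; linarith
end

section
/- Let Ω be a Reuleaux polygon of width 1 with inradius r, centered at the origin of its incircle. Suppose M_1, M_2 are contact points of the incircle lying on arcs γ_1 (centered at P_1) and γ_{2m} (centered at P_{2m}) respectively, with t the polar angle of M_2 and the sector [t, π/2] (of length u = π/2 − t) containing vertex meeting angles t < x_1 < … < x_{2m−1} < π/2. Then r = 1 − (∑_{k=1}^{2m−1} (−1)^{k−1} cos x_k)/sin u. -/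
open Real Finset

/-- Sector formula for the inradius of a Reuleaux polygon.  Identifying the
plane with `ℂ`, suppose the incircle of radius `r` is centered at the origin,
the contact point `M₁ = (0, −r)` gives the vertex `P₁ = (0, 1−r) = i(1−r)`,
the contact point `M₂` has polar angle `t = π/2 − u` (so the sector
`[t, π/2]` has length `u`) and `P_{2m} = −(1−r)e^{it}`, and the vertices
satisfy `P_{k−1} = P_k + e^{iβ_k}`.  With the sector angles
`x₁ = β_{2m}, x₂ = α_{2m−2} = β_{2m−1} − π, x₃ = β_{2m−2}, …,
x_{2m−2} = α₂ = β₃ − π, x_{2m−1} = β₂`, one has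
`r = 1 − (∑_{k=1}^{2m−1} (−1)^{k−1} cos x_k)/ sin u`. -/
theorem inradius_sector_formula (m : ℕ) (hm : 1 ≤ m) (r u : ℝ)
    (hu0 : 0 < u) (hupi : u < Real.pi)
    (P : ℕ → ℂ) (β x : ℕ → ℝ)
    (hP1 : P 1 = ((1 - r : ℝ) : ℂ) * Complex.I)
    (hP2m : P (2 * m) = -((1 - r : ℝ) : ℂ) *
      Complex.exp (((Real.pi / 2 - u : ℝ) : ℂ) * Complex.I))
    (hrec : ∀ k, 2 ≤ k → k ≤ 2 * m →
      P (k - 1) = P k + Complex.exp (((β k : ℝ) : ℂ) * Complex.I))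
    (hxodd : ∀ i, 1 ≤ i → i ≤ m → x (2 * i - 1) = β (2 * m - 2 * i + 2))
    (hxeven : ∀ i, 1 ≤ i → i + 1 ≤ m → x (2 * i) = β (2 * m - 2 * i + 1) - Real.pi) :
    r = 1 - (∑ k ∈ Finset.Icc 1 (2 * m - 1), (-1 : ℝ) ^ (k - 1) * Real.cos (x k))
      / Real.sin u := by
  have hsinpos : 0 < Real.sin u := Real.sin_pos_of_pos_of_lt_pi hu0 hupi
  have hsin : Real.sin u ≠ 0 := ne_of_gt hsinpos
  -- telescoping sum
  have tele : ∀ n, 1 ≤ n → n ≤ 2 * m →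
      P 1 = P n + ∑ k ∈ Finset.Icc 2 n, Complex.exp (((β k : ℝ) : ℂ) * Complex.I) := by
    intro n h1
    induction n, h1 using Nat.le_induction with
    | base => intro _; simp
    | succ n hn ih =>
      intro hle
      have h' : n ≤ 2 * m := by omega
      have hr := hrec (n + 1) (by omega) hle
      simp only [Nat.add_sub_cancel] at hr
      rw [ih h', Finset.sum_Icc_succ_top (by omega : 2 ≤ n + 1), hr]
      ring
  have main := tele (2 * m) (by omega) le_rfl
  rw [hP1, hP2m] at main
  have hre := congrArg Complex.re main
  simp only [Complex.mul_re, Complex.ofReal_re, Complex.ofReal_im, Complex.I_re,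
    Complex.I_im, Complex.add_re, Complex.neg_re, Complex.neg_im, Complex.re_sum,
    Complex.exp_ofReal_mul_I_re, mul_zero, mul_one, zero_mul, sub_zero, zero_sub,
    neg_zero] at hre
  -- hre : 0 = -(1-r) * cos (π/2 - u) + ∑ cos (β k)  (up to rearrangement)
  rw [Real.cos_pi_div_two_sub] at hre
  -- reindex the sum
  have hsum : ∑ k ∈ Finset.Icc 1 (2 * m - 1), (-1 : ℝ) ^ (k - 1) * Real.cos (x k)
      = ∑ k ∈ Finset.Icc 2 (2 * m), Real.cos (β k) := by
    apply Finset.sum_nbij' (i := fun k => 2 * m + 1 - k) (j := fun k => 2 * m + 1 - k)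
    · intro a ha; simp only [Finset.mem_Icc] at *; omega
    · intro a ha; simp only [Finset.mem_Icc] at *; omega
    · intro a ha; simp only [Finset.mem_Icc] at ha; omega
    · intro a ha; simp only [Finset.mem_Icc] at ha; omega
    · intro k hk
      simp only [Finset.mem_Icc] at hk
      rcases Nat.even_or_odd k with he | ho
      · obtain ⟨i, hi⟩ := he
        have h1i : 1 ≤ i := by omega
        have h2i : i + 1 ≤ m := by omega
        have hx := hxeven i h1i h2i
        rw [show k = 2 * i from by omega, hx,
          show 2 * m + 1 - 2 * i = 2 * m - 2 * i + 1 from by omega,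
          show 2 * i - 1 = 2 * (i - 1) + 1 from by omega]
        rw [Real.cos_sub_pi]
        rw [pow_succ, pow_mul]
        ring_nf
      · obtain ⟨i, hi⟩ := ho
        have h1i : 1 ≤ i + 1 := by omega
        have h2i : i + 1 ≤ m := by omega
        have hx := hxodd (i + 1) h1i h2i
        rw [show k = 2 * (i + 1) - 1 from by omega, hx,
          show 2 * m + 1 - (2 * (i + 1) - 1) = 2 * m - 2 * (i + 1) + 2 from by omega,
          show 2 * (i + 1) - 1 - 1 = 2 * i from by omega]
        rw [pow_mul]
        norm_num
  rw [hsum]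
  field_simp
  nlinarith [hre]
end

section
/- Let Ω be a Reuleaux polygon of width 1 with inradius r ∈ [1−1/√3, 1/2]. Then the length u of any sector (in the sense of three non-coplanar contact points) satisfies u ≥ 2(√(1−2r) + r(2 arctan(√(4(1−r)² − 1)) − arccos(r/(1−r)))). -/
open MeasureTheory Metric Real Set

/-- De Giorgi perimeter, realized here as the 1-dimensional Hausdorff
measure of the topological boundary (they agree for the convex bodies
considered in this paper). -/
noncomputable def perim (E : Set ℂ) : ℝ := (μH[1] (frontier E)).toReal

/-- Planar Lebesgue area. -/
noncomputable def area (E : Set ℂ) : ℝ := (volume E).toReal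

/-- The Cheeger constant `h(Ω) = inf_{E ⊆ Ω} P(E)/|E|`. -/
noncomputable def cheeger (Ω : Set ℂ) : ℝ :=
  sInf {q : ℝ | ∃ E : Set ℂ, E ⊆ Ω ∧ MeasurableSet E ∧ 0 < area E ∧ q = perim E / area E}

/-- Support function of a planar set in direction `v`. -/
noncomputable def suppFn (Ω : Set ℂ) (v : ℂ) : ℝ :=
  sSup ((fun x => v.re * x.re + v.im * x.im) '' Ω)

/-- `Ω` has constant width `w`: in every unit direction, the width equals `w`. -/
def HasConstantWidth (Ω : Set ℂ) (w : ℝ) : Prop :=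
  ∀ v : ℂ, ‖v‖ = 1 → suppFn Ω v + suppFn Ω (-v) = w

/-- The inradius of a planar set: supremum of radii of enclosed disks. -/
noncomputable def inradius (Ω : Set ℂ) : ℝ :=
  sSup {r : ℝ | ∃ c : ℂ, Metric.closedBall c r ⊆ Ω}

section AuxLemmas


private lemma arctan_cubic_lb {t : ℝ} (ht : 0 ≤ t) : t - t ^ 3 / 3 ≤ Real.arctan t := by
  have hder : ∀ u : ℝ, HasDerivAt (fun y : ℝ => Real.arctan y - (y - y ^ 3 / 3))
      (u ^ 4 / (1 + u ^ 2)) u := by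
    intro u
    have h1 := Real.hasDerivAt_arctan u
    have h2 : HasDerivAt (fun y : ℝ => y - y ^ 3 / 3) (1 - 3 * u ^ 2 / 3) u := by
      have h4 := (hasDerivAt_pow 3 u).div_const 3
      have h5 := (hasDerivAt_id u).sub h4
      exact h5.congr_deriv (by norm_num)
    have h3 := h1.sub h2
    refine h3.congr_deriv ?_
    have hu : (0:ℝ) < 1 + u ^ 2 := by positivity
    field_simp
    ring
  have hmono : Monotone (fun y : ℝ => Real.arctan y - (y - y ^ 3 / 3)) := by
    apply monotone_of_deriv_nonneg (fun u => (hder u).differentiableAt)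
    intro u
    rw [(hder u).deriv]
    positivity
  have h := hmono ht
  simp only [Real.arctan_zero] at h
  norm_num at h
  linarith

private lemma key_poly {z : ℝ} (h0 : 0 ≤ z) (h1 : z ≤ 0.1548) :
    (4 - z) ^ 2 ≤ (z + 2) * (3 - z * (z + 2)) ^ 2 := by
  nlinarith [mul_nonneg h0 h0, mul_nonneg (mul_nonneg h0 h0) h0,
    mul_nonneg (mul_nonneg (mul_nonneg h0 h0) h0) h0,
    mul_nonneg h0 (sub_nonneg.2 h1), sq_nonneg z, sq_nonneg (z*z)]

-- core: x ≤ x^2 * B + (1 - x^2) * arctan x  where B = arctan (x * w), w = sqrt(x^2+2)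
private lemma core_ineq {x : ℝ} (hx : 0 ≤ x) (hx2 : x ^ 2 ≤ 0.1548) :
    x ≤ x ^ 2 * Real.arctan (Real.sqrt (x ^ 2 * (x ^ 2 + 2)))
        + (1 - x ^ 2) * Real.arctan x := by
  set v : ℝ := Real.sqrt (x ^ 2 * (x ^ 2 + 2)) with hv
  have hvnn : 0 ≤ v := Real.sqrt_nonneg _
  have hvsq : v ^ 2 = x ^ 2 * (x ^ 2 + 2) := Real.sq_sqrt (by positivity)
  have hb1 : v - v ^ 3 / 3 ≤ Real.arctan v := arctan_cubic_lb hvnn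
  have hb2 : x - x ^ 3 / 3 ≤ Real.arctan x := arctan_cubic_lb hx
  have h1x : 0 ≤ 1 - x ^ 2 := by nlinarith
  -- key bracket : x^3 * (4 - x^2) ≤ x^2 * (v * (3 - v^2))
  have hK : 0 ≤ 3 - v ^ 2 := by rw [hvsq]; nlinarith
  have hbr : x ^ 3 * (4 - x ^ 2) ≤ x ^ 2 * (v * (3 - v ^ 2)) := by
    rcases eq_or_lt_of_le hx with h | hxpos
    · simp [← h]
    · have hz := key_poly (z := x ^ 2) (by positivity) hx2
      -- (x * (4 - x^2))^2 ≤ (v * (3 - v^2))^2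
      have hsq : (x * (4 - x ^ 2)) ^ 2 ≤ (v * (3 - v ^ 2)) ^ 2 := by
        have : (v * (3 - v ^ 2)) ^ 2 = x ^ 2 * ((x ^ 2 + 2) * (3 - x ^ 2 * (x ^ 2 + 2)) ^ 2) := by
          rw [mul_pow, hvsq]; ring
        rw [this]
        have h2 : (x * (4 - x ^ 2)) ^ 2 = x ^ 2 * (4 - x ^ 2) ^ 2 := by ring
        rw [h2]
        exact mul_le_mul_of_nonneg_left hz (by positivity)
      have hL : 0 ≤ x * (4 - x ^ 2) := by nlinarith
      have hR : 0 ≤ v * (3 - v ^ 2) := mul_nonneg hvnn hK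
      have : x * (4 - x ^ 2) ≤ v * (3 - v ^ 2) := by
        nlinarith [hsq, hL, hR]
      calc x ^ 3 * (4 - x ^ 2) = x ^ 2 * (x * (4 - x ^ 2)) := by ring
        _ ≤ x ^ 2 * (v * (3 - v ^ 2)) := by
            exact mul_le_mul_of_nonneg_left this (by positivity)
  have e1 : x ^ 2 * (v - v ^ 3 / 3) ≤ x ^ 2 * Real.arctan v :=
    mul_le_mul_of_nonneg_left hb1 (by positivity)
  have e2 : (1 - x ^ 2) * (x - x ^ 3 / 3) ≤ (1 - x ^ 2) * Real.arctan x :=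
    mul_le_mul_of_nonneg_left hb2 h1x
  nlinarith [e1, e2, hbr]

private lemma arctan_nonneg' {x : ℝ} (hx : 0 ≤ x) : 0 ≤ Real.arctan x := by
  have := Real.arctan_strictMono.monotone hx
  simpa [Real.arctan_zero] using this


private lemma final_analytic {r g : ℝ} (hlo : 1 - 1 / Real.sqrt 3 ≤ r) (hhi : r ≤ 1 / 2)
    (hg0 : 0 < g) (hg1 : g < Real.pi)
    (hcos : 1 - 1 / (2 * (1 - r) ^ 2) ≤ Real.cos g) :
    2 * (Real.sqrt (1 - 2 * r) +
        r * (2 * Real.arctan (Real.sqrt (4 * (1 - r) ^ 2 - 1))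
          - Real.arccos (r / (1 - r))))
      ≤ Real.pi - g := by
  have hs3 : (1.732 : ℝ) < Real.sqrt 3 := by
    have h := Real.sq_sqrt (show (0:ℝ) ≤ 3 by norm_num)
    nlinarith [Real.sqrt_nonneg 3]
  have hr0 : 0 < r := by
    have h1 : 1 / Real.sqrt 3 < 1 := by
      rw [div_lt_one (by positivity)]
      linarith
    linarith
  have h1r : (0:ℝ) < 1 - r := by linarith
  set x : ℝ := Real.sqrt (1 - 2 * r) with hxdef
  have hxnn : 0 ≤ x := Real.sqrt_nonneg _
  have hx2 : x ^ 2 = 1 - 2 * r := Real.sq_sqrt (by linarith)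
  have hxb : x ^ 2 ≤ 0.1548 := by
    rw [hx2]
    have h2 : 1 / Real.sqrt 3 ≤ 1 / 1.732 :=
      one_div_le_one_div_of_le (by norm_num) hs3.le
    have h3 : (2:ℝ) / 1.732 - 1 ≤ 0.1548 := by norm_num
    linarith
  have harccos : Real.arccos (r / (1 - r)) = 2 * Real.arctan x := by
    have h2a : Real.cos (2 * Real.arctan x) = (1 - x ^ 2) / (1 + x ^ 2) := by
      rw [Real.cos_two_mul, Real.cos_arctan]
      have h1 : (0:ℝ) < 1 + x ^ 2 := by positivity
      rw [div_pow, one_pow, Real.sq_sqrt h1.le]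
      field_simp
      ring
    have harg : r / (1 - r) = (1 - x ^ 2) / (1 + x ^ 2) := by
      rw [hx2]
      rw [div_eq_div_iff (by linarith) (by nlinarith)]
      ring
    rw [harg, ← h2a, Real.arccos_cos]
    · linarith [arctan_nonneg' hxnn]
    · linarith [Real.arctan_lt_pi_div_two x]
  set v : ℝ := Real.sqrt (4 * (1 - r) ^ 2 - 1) with hvdef
  have hvnn : 0 ≤ v := Real.sqrt_nonneg _
  have hv2 : v ^ 2 = 4 * (1 - r) ^ 2 - 1 := Real.sq_sqrt (by nlinarith)
  have hveq : v = Real.sqrt (x ^ 2 * (x ^ 2 + 2)) := by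
    rw [hvdef, hx2]
    congr 1
    ring
  have hB0 : 0 ≤ Real.arctan v := arctan_nonneg' hvnn
  have hBlt : Real.arctan v < Real.pi / 2 := Real.arctan_lt_pi_div_two v
  have hcos2 : Real.cos (Real.pi - 2 * Real.arctan v) = 1 - 1 / (2 * (1 - r) ^ 2) := by
    rw [Real.cos_pi_sub, Real.cos_two_mul, Real.cos_arctan]
    rw [div_pow, one_pow, Real.sq_sqrt (by positivity : (0:ℝ) ≤ 1 + v ^ 2)]
    rw [hv2]
    have h4 : (0:ℝ) < (1 - r) ^ 2 := by positivity
    have h5 : (0:ℝ) < 1 + (4 * (1 - r) ^ 2 - 1) := by nlinarith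
    field_simp
    ring
  have hgle : g ≤ Real.pi - 2 * Real.arctan v := by
    by_contra hlt
    push_neg at hlt
    have h1m : Real.pi - 2 * Real.arctan v ∈ Set.Icc 0 Real.pi :=
      ⟨by linarith, by linarith [Real.pi_pos]⟩
    have h2m : g ∈ Set.Icc 0 Real.pi := ⟨hg0.le, hg1.le⟩
    have hh := Real.strictAntiOn_cos h1m h2m hlt
    rw [hcos2] at hh
    linarith
  have hcore := core_ineq hxnn hxb
  rw [← hveq, hx2] at hcore
  rw [harccos]
  nlinarith [hcore, hgle]

end AuxLemmas

set_option maxHeartbeats 2000000 in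
/-- Let `Ω` be a Reuleaux polygon of width 1 with inradius `r` and incircle
centered at the origin.  Let `M₀, M₁, M₂` be contact points (boundary points
on the incircle) with polar angles `t₀ < t₁ < t₂ < t₀ + 2π` not contained in
a common closed half-plane through the origin.  Then the length
`u = t₀ + π − t₁` of the corresponding sector satisfies
`u ≥ 2(√(1−2r) + r(2 arctan √(4(1−r)²−1) − arccos(r/(1−r))))`. -/
theorem sector_length_lower_bound (N : ℕ) (hN : 1 ≤ N)
    (P : Fin (2 * N + 1) → ℂ) (Ω : Set ℂ)
    (hΩ : Ω = ⋂ k, Metric.closedBall (P k) 1)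
    (hvert : ∀ k, P k ∈ frontier Ω)
    (hwidth : HasConstantWidth Ω 1)
    (r : ℝ) (hr : r = inradius Ω)
    (hrlo : 1 - 1 / Real.sqrt 3 ≤ r) (hrhi : r ≤ 1 / 2)
    (hball : Metric.closedBall (0 : ℂ) r ⊆ Ω)
    (t : Fin 3 → ℝ) (M : Fin 3 → ℂ)
    (hM : ∀ i, M i = ((r : ℝ) : ℂ) * Complex.exp (((t i : ℝ) : ℂ) * Complex.I))
    (hMfr : ∀ i, M i ∈ frontier Ω)
    (horder : t 0 < t 1 ∧ t 1 < t 2 ∧ t 2 < t 0 + 2 * Real.pi)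
    (hhalf : ¬ ∃ v : ℂ, v ≠ 0 ∧ ∀ i, 0 ≤ v.re * (M i).re + v.im * (M i).im) :
    2 * (Real.sqrt (1 - 2 * r) +
        r * (2 * Real.arctan (Real.sqrt (4 * (1 - r) ^ 2 - 1))
          - Real.arccos (r / (1 - r))))
      ≤ t 0 + Real.pi - t 1 := by
  obtain ⟨h01, h12, h20⟩ := horder
  have hs3 : (1.732 : ℝ) < Real.sqrt 3 := by
    have h := Real.sq_sqrt (show (0:ℝ) ≤ 3 by norm_num)
    nlinarith [Real.sqrt_nonneg 3]
  have hr0 : 0 < r := by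
    have h1 : 1 / Real.sqrt 3 < 1 := by
      rw [div_lt_one (by positivity)]
      linarith
    linarith
  have hclosed : IsClosed Ω := by
    rw [hΩ]; exact isClosed_iInter fun k => Metric.isClosed_closedBall
  -- Step 1: the angular gap is less than π
  have hgap : t 1 - t 0 < Real.pi := by
    by_contra hge
    push_neg at hge
    apply hhalf
    set θ : ℝ := (t 0 + t 1) / 2 + Real.pi with hθ
    refine ⟨Complex.exp ((θ : ℂ) * Complex.I), Complex.exp_ne_zero _, ?_⟩
    intro i
    have hvre : (Complex.exp ((θ : ℂ) * Complex.I)).re = Real.cos θ :=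
      Complex.exp_ofReal_mul_I_re θ
    have hvim : (Complex.exp ((θ : ℂ) * Complex.I)).im = Real.sin θ :=
      Complex.exp_ofReal_mul_I_im θ
    have hMre : (M i).re = r * Real.cos (t i) := by
      rw [hM i, Complex.re_ofReal_mul, Complex.exp_ofReal_mul_I_re]
    have hMim : (M i).im = r * Real.sin (t i) := by
      rw [hM i, Complex.im_ofReal_mul, Complex.exp_ofReal_mul_I_im]
    rw [hvre, hvim, hMre, hMim]
    have hid : Real.cos θ * (r * Real.cos (t i)) + Real.sin θ * (r * Real.sin (t i))
        = r * Real.cos (t i - θ) := by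
      rw [Real.cos_sub]; ring
    rw [hid]
    apply mul_nonneg hr0.le
    have hglt : t 1 - t 0 < 2 * Real.pi := by linarith
    have hcos_half : Real.cos ((t 1 - t 0) / 2) ≤ 0 := by
      apply Real.cos_nonpos_of_pi_div_two_le_of_le
      · linarith
      · linarith [Real.pi_pos]
    fin_cases i
    · show (0:ℝ) ≤ Real.cos (t 0 - θ)
      have he : t 0 - θ = -((t 1 - t 0) / 2 + Real.pi) := by rw [hθ]; ring
      rw [he, Real.cos_neg, Real.cos_add_pi]
      linarith
    · show (0:ℝ) ≤ Real.cos (t 1 - θ)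
      have he : t 1 - θ = (t 1 - t 0) / 2 - Real.pi := by rw [hθ]; ring
      rw [he, Real.cos_sub_pi]
      linarith
    · show (0:ℝ) ≤ Real.cos (t 2 - θ)
      apply Real.cos_nonneg_of_mem_Icc
      constructor
      · simp only [hθ]
        linarith
      · simp only [hθ]
        linarith
  -- Step 2: the contact points force vertices opposite to them
  have hvertex : ∀ i : Fin 3,
      (((r - 1 : ℝ) : ℂ) * Complex.exp (((t i : ℝ) : ℂ) * Complex.I)) ∈ Ω := by
    intro i
    have hMΩ : M i ∈ Ω := by
      have h1 : M i ∈ closure Ω := frontier_subset_closure (hMfr i)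
      rwa [hclosed.closure_eq] at h1
    have hMint : M i ∉ interior Ω := (hMfr i).2
    have hek : ∃ k, (1:ℝ) ≤ dist (M i) (P k) := by
      by_contra hno
      push_neg at hno
      apply hMint
      have hsub : (⋂ k, Metric.ball (P k) 1) ⊆ Ω := by
        rw [hΩ]; exact Set.iInter_mono fun k => Metric.ball_subset_closedBall
      have hopen : IsOpen (⋂ k, Metric.ball (P k) 1) :=
        isOpen_iInter_of_finite fun k => Metric.isOpen_ball
      exact interior_maximal hsub hopen (Set.mem_iInter.2 fun k => Metric.mem_ball.2 (hno k))
    obtain ⟨k, hk1⟩ := hek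
    have hk2 : dist (M i) (P k) ≤ 1 := by
      have h1 : M i ∈ Metric.closedBall (P k) 1 := by
        rw [hΩ] at hMΩ; exact Set.mem_iInter.1 hMΩ k
      exact Metric.mem_closedBall.1 h1
    have hkeq : dist (M i) (P k) = 1 := le_antisymm hk2 hk1
    have hPk : ‖P k‖ ≤ 1 - r := by
      by_cases hz : P k = 0
      · rw [hz]; simp; linarith
      · have ha : (0:ℝ) < ‖P k‖ := norm_pos_iff.mpr hz
        set q : ℂ := ((-(r / ‖P k‖) : ℝ) : ℂ) * P k with hq
        have hqball : q ∈ Metric.closedBall (0:ℂ) r := by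
          rw [Metric.mem_closedBall, dist_zero_right, hq, norm_mul, Complex.norm_real,
            Real.norm_eq_abs, abs_neg,
            abs_of_pos (by positivity : (0:ℝ) < r / ‖P k‖)]
          rw [div_mul_cancel₀]
          exact ha.ne'
        have hqΩ := hball hqball
        have hqd : dist q (P k) ≤ 1 := by
          rw [hΩ] at hqΩ
          exact Metric.mem_closedBall.1 (Set.mem_iInter.1 hqΩ k)
        have hqd2 : dist q (P k) = r + ‖P k‖ := by
          rw [dist_eq_norm, hq]
          have h5 : ((-(r / ‖P k‖) : ℝ) : ℂ) * P k - P k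
              = ((-(r / ‖P k‖) - 1 : ℝ) : ℂ) * P k := by
            push_cast
            ring
          rw [h5, norm_mul, Complex.norm_real, Real.norm_eq_abs]
          have hpos : (0:ℝ) < r / ‖P k‖ := by positivity
          have h6 : |(-(r / ‖P k‖) - 1 : ℝ)| = r / ‖P k‖ + 1 := by
            rw [abs_of_nonpos (by linarith)]
            ring
          rw [h6]
          field_simp
        rw [hqd2] at hqd
        linarith
    have hc : Real.sin (t i) ^ 2 + Real.cos (t i) ^ 2 = 1 := Real.sin_sq_add_cos_sq (t i)
    have hMre : (M i).re = r * Real.cos (t i) := by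
      rw [hM i, Complex.re_ofReal_mul, Complex.exp_ofReal_mul_I_re]
    have hMim : (M i).im = r * Real.sin (t i) := by
      rw [hM i, Complex.im_ofReal_mul, Complex.exp_ofReal_mul_I_im]
    have hF1 : (r * Real.cos (t i) - (P k).re) ^ 2 + (r * Real.sin (t i) - (P k).im) ^ 2 = 1 := by
      have h1 : dist (M i) (P k) ^ 2 = ((M i).re - (P k).re) ^ 2 + ((M i).im - (P k).im) ^ 2 := by
        rw [Complex.dist_eq_re_im]
        rw [Real.sq_sqrt (by positivity)]
      rw [hkeq] at h1
      rw [hMre, hMim] at h1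
      linarith [h1]
    have hF2 : (P k).re ^ 2 + (P k).im ^ 2 ≤ (1 - r) ^ 2 := by
      have h1 : ‖P k‖ ^ 2 ≤ (1 - r) ^ 2 := by
        apply pow_le_pow_left₀ (norm_nonneg _) hPk
      rwa [Complex.sq_norm, Complex.normSq_apply, ← pow_two, ← pow_two] at h1
    have h9 : r * (((P k).re + (1 - r) * Real.cos (t i)) ^ 2
          + ((P k).im + (1 - r) * Real.sin (t i)) ^ 2)
        = ((P k).re ^ 2 + (P k).im ^ 2 - (1 - r) ^ 2)
          - (1 - r) * ((r * Real.cos (t i) - (P k).re) ^ 2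
            + (r * Real.sin (t i) - (P k).im) ^ 2 - 1)
          + (r * (1 - r)) * (Real.sin (t i) ^ 2 + Real.cos (t i) ^ 2 - 1) := by ring
    have hsum : ((P k).re + (1 - r) * Real.cos (t i)) ^ 2
        + ((P k).im + (1 - r) * Real.sin (t i)) ^ 2 ≤ 0 := by
      nlinarith [h9, hF1, hF2, hc, hr0]
    have hre0 : (P k).re + (1 - r) * Real.cos (t i) = 0 := by
      have h10 : ((P k).re + (1 - r) * Real.cos (t i)) ^ 2 = 0 :=
        le_antisymm (by nlinarith [sq_nonneg ((P k).im + (1 - r) * Real.sin (t i))])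
          (sq_nonneg _)
      exact sq_eq_zero_iff.1 h10
    have him0 : (P k).im + (1 - r) * Real.sin (t i) = 0 := by
      have h10 : ((P k).im + (1 - r) * Real.sin (t i)) ^ 2 = 0 :=
        le_antisymm (by nlinarith [sq_nonneg ((P k).re + (1 - r) * Real.cos (t i))])
          (sq_nonneg _)
      exact sq_eq_zero_iff.1 h10
    have hPkeq : P k = ((r - 1 : ℝ) : ℂ) * Complex.exp (((t i : ℝ) : ℂ) * Complex.I) := by
      apply Complex.ext
      · rw [Complex.re_ofReal_mul, Complex.exp_ofReal_mul_I_re]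
        linarith
      · rw [Complex.im_ofReal_mul, Complex.exp_ofReal_mul_I_im]
        linarith
    rw [← hPkeq]
    have h1 : P k ∈ closure Ω := frontier_subset_closure (hvert k)
    rwa [hclosed.closure_eq] at h1
  -- Step 3: diameter of Ω is at most 1
  have hdiam : ∀ X ∈ Ω, ∀ Y ∈ Ω, ‖X - Y‖ ≤ 1 := by
    intro X hX Y hY
    rcases eq_or_ne X Y with h | h
    · simp [h]
    · set d : ℝ := ‖X - Y‖ with hd
      have hd0 : 0 < d := norm_pos_iff.2 (sub_ne_zero.2 h)
      set v : ℂ := Complex.ofReal d⁻¹ * (X - Y) with hv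
      have hvnorm : ‖v‖ = 1 := by
        rw [hv, norm_mul, Complex.norm_real, Real.norm_eq_abs,
          abs_of_pos (inv_pos.2 hd0), ← hd]
        field_simp
      have hbdd : ∀ w : ℂ, BddAbove ((fun x => w.re * x.re + w.im * x.im) '' Ω) := by
        intro w
        refine ⟨‖w‖ * (‖P 0‖ + 1), ?_⟩
        rintro y ⟨x, hx, rfl⟩
        have hxP : dist x (P 0) ≤ 1 := by
          rw [hΩ] at hx; exact Metric.mem_closedBall.1 (Set.mem_iInter.1 hx 0)
        have hxn : ‖x‖ ≤ ‖P 0‖ + 1 := by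
          have h1 := norm_add_le (P 0) (x - P 0)
          simp only [add_sub_cancel] at h1
          rw [← dist_eq_norm] at h1
          linarith
        have h1 : w.re * x.re + w.im * x.im ≤ ‖w‖ * ‖x‖ := by
          have h2 : w.re * x.re + w.im * x.im = ((starRingEnd ℂ) w * x).re := by
            simp only [Complex.mul_re, Complex.conj_re, Complex.conj_im]
            ring
          rw [h2]
          calc ((starRingEnd ℂ) w * x).re ≤ |((starRingEnd ℂ) w * x).re| := le_abs_self _
            _ ≤ ‖(starRingEnd ℂ) w * x‖ := Complex.abs_re_le_norm _
            _ = ‖w‖ * ‖x‖ := by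
                rw [norm_mul, Complex.norm_conj]
        calc w.re * x.re + w.im * x.im ≤ ‖w‖ * ‖x‖ := h1
          _ ≤ ‖w‖ * (‖P 0‖ + 1) := mul_le_mul_of_nonneg_left hxn (norm_nonneg w)
      have hw := hwidth v hvnorm
      have h1 : v.re * X.re + v.im * X.im ≤ suppFn Ω v :=
        le_csSup (hbdd v) ⟨X, hX, rfl⟩
      have h2 : (-v).re * Y.re + (-v).im * Y.im ≤ suppFn Ω (-v) :=
        le_csSup (hbdd (-v)) ⟨Y, hY, rfl⟩
      have h3 : v.re * (X.re - Y.re) + v.im * (X.im - Y.im) ≤ 1 := by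
        have h4 := add_le_add h1 h2
        rw [hw] at h4
        simp only [Complex.neg_re, Complex.neg_im] at h4
        linarith
      have h6 : d ^ 2 = (X - Y).re ^ 2 + (X - Y).im ^ 2 := by
        rw [hd, Complex.sq_norm, Complex.normSq_apply]
        ring
      have h7 : v.re * (X.re - Y.re) + v.im * (X.im - Y.im) = d := by
        rw [hv, Complex.re_ofReal_mul, Complex.im_ofReal_mul]
        have hre : (X - Y).re = X.re - Y.re := Complex.sub_re X Y
        have him : (X - Y).im = X.im - Y.im := Complex.sub_im X Y
        rw [← hre, ← him]
        have h8 : d⁻¹ * (X - Y).re * (X - Y).re + d⁻¹ * (X - Y).im * (X - Y).im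
            = d⁻¹ * ((X - Y).re ^ 2 + (X - Y).im ^ 2) := by ring
        rw [h8, ← h6]
        field_simp
      linarith
  -- Step 4: distance between the two vertices, hence the cosine bound
  have hd01 := hdiam _ (hvertex 0) _ (hvertex 1)
  have hnsq : ‖(((r - 1 : ℝ) : ℂ) * Complex.exp (((t 0 : ℝ) : ℂ) * Complex.I))
      - (((r - 1 : ℝ) : ℂ) * Complex.exp (((t 1 : ℝ) : ℂ) * Complex.I))‖ ^ 2
      = (1 - r) ^ 2 * (2 - 2 * Real.cos (t 1 - t 0)) := by
    rw [Complex.sq_norm, Complex.normSq_apply]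
    rw [Complex.sub_re, Complex.sub_im, Complex.re_ofReal_mul, Complex.im_ofReal_mul,
      Complex.re_ofReal_mul, Complex.im_ofReal_mul,
      Complex.exp_ofReal_mul_I_re, Complex.exp_ofReal_mul_I_im,
      Complex.exp_ofReal_mul_I_re, Complex.exp_ofReal_mul_I_im]
    rw [Real.cos_sub]
    linear_combination ((r - 1) ^ 2) * Real.sin_sq_add_cos_sq (t 0)
      + ((r - 1) ^ 2) * Real.sin_sq_add_cos_sq (t 1)
  have hcosb : 1 - 1 / (2 * (1 - r) ^ 2) ≤ Real.cos (t 1 - t 0) := by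
    have h1r : (0:ℝ) < 1 - r := by linarith
    have hD : (0:ℝ) < 2 * (1 - r) ^ 2 := by positivity
    have h2 : (1 - r) ^ 2 * (2 - 2 * Real.cos (t 1 - t 0)) ≤ 1 := by
      rw [← hnsq]
      nlinarith [hd01, norm_nonneg ((((r - 1 : ℝ) : ℂ) * Complex.exp (((t 0 : ℝ) : ℂ) * Complex.I))
        - (((r - 1 : ℝ) : ℂ) * Complex.exp (((t 1 : ℝ) : ℂ) * Complex.I)))]
    have hfe : 1 - 1 / (2 * (1 - r) ^ 2) = (2 * (1 - r) ^ 2 - 1) / (2 * (1 - r) ^ 2) := by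
      field_simp
    rw [hfe, div_le_iff₀ hD]
    nlinarith [h2]
  -- Step 5: conclude with the analytic inequality
  have hfin := final_analytic hrlo hrhi (by linarith : (0:ℝ) < t 1 - t 0) hgap hcosb
  linarith [hfin]
end

section
/- If r ≤ 0.4302, then 2(√(1−2r) + r(2 arctan(√(4(1−r)² − 1)) − arccos(r/(1−r)))) ≥ 0.9926; moreover the map r ↦ 2(√(1−2r) + r(2 arctan(√(4(1−r)²−1)) − arccos(r/(1−r)))) is decreasing on [1−1/√3, 1/2]. -/
open Real Set

private lemma my_arctan_le_self {x : ℝ} (hx : 0 ≤ x) : Real.arctan x ≤ x := by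
  have hmono : Monotone (fun t : ℝ => t - Real.arctan t) := by
    apply monotone_of_deriv_nonneg
    · exact differentiable_id.sub Real.differentiable_arctan
    · intro y
      have h : HasDerivAt (fun t : ℝ => t - Real.arctan t) (1 - 1/(1+y^2)) y :=
        (hasDerivAt_id y).sub (Real.hasDerivAt_arctan y)
      rw [h.deriv]
      have h0 : (0:ℝ) < 1 + y^2 := by positivity
      rw [sub_nonneg, div_le_one h0]
      nlinarith [sq_nonneg y]
  have := hmono hx
  simp only [Real.arctan_zero, sub_zero] at this
  linarith

private lemma my_arctan_lower {x : ℝ} (hx : 0 ≤ x) : x - x^3/3 ≤ Real.arctan x := by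
  have hmono : Monotone (fun t : ℝ => Real.arctan t - (t - t^3/3)) := by
    apply monotone_of_deriv_nonneg
    · exact Real.differentiable_arctan.sub
        (differentiable_id.sub ((differentiable_id.pow 3).div_const 3))
    · intro y
      have h : HasDerivAt (fun t : ℝ => Real.arctan t - (t - t^3/3))
          (1/(1+y^2) - (1 - y^2)) y := by
        have h1 := (Real.hasDerivAt_arctan y).sub
          ((hasDerivAt_id y).sub ((hasDerivAt_pow 3 y).div_const 3))
        refine h1.congr_deriv ?_
        push_cast
        ring
      rw [h.deriv]
      have h0 : (0:ℝ) < 1 + y^2 := by positivity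
      rw [sub_nonneg, le_div_iff₀ h0]
      nlinarith [sq_nonneg y, sq_nonneg (y*y)]
  have := hmono hx
  simp only [Real.arctan_zero] at this
  norm_num at this
  linarith

private lemma my_arctan_upper {x : ℝ} (hx : 0 ≤ x) :
    Real.arctan x ≤ x - x^3/3 + x^5/5 := by
  have hmono : Monotone (fun t : ℝ => t - t^3/3 + t^5/5 - Real.arctan t) := by
    apply monotone_of_deriv_nonneg
    · exact ((differentiable_id.sub ((differentiable_id.pow 3).div_const 3)).add
        ((differentiable_id.pow 5).div_const 5)).sub Real.differentiable_arctan
    · intro y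
      have h : HasDerivAt (fun t : ℝ => t - t^3/3 + t^5/5 - Real.arctan t)
          (1 - y^2 + y^4 - 1/(1+y^2)) y := by
        have h1 := (((hasDerivAt_id y).sub ((hasDerivAt_pow 3 y).div_const 3)).add
          ((hasDerivAt_pow 5 y).div_const 5)).sub (Real.hasDerivAt_arctan y)
        refine h1.congr_deriv ?_
        push_cast
        ring
      rw [h.deriv]
      have h0 : (0:ℝ) < 1 + y^2 := by positivity
      rw [sub_nonneg, div_le_iff₀ h0]
      nlinarith [sq_nonneg y, sq_nonneg (y*y), sq_nonneg (y*y*y)]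
  have := hmono hx
  simp only [Real.arctan_zero] at this
  norm_num at this
  linarith

private lemma my_arctan_compl {x : ℝ} (h0 : 0 < x) (h1 : x < 1) :
    Real.arctan x = Real.pi/4 - Real.arctan ((1-x)/(1+x)) := by
  have hx1 : (0:ℝ) < 1 + x := by linarith
  have hprod : x * ((1-x)/(1+x)) < 1 := by
    rw [← mul_div_assoc, div_lt_one hx1]
    nlinarith
  have h := Real.arctan_add hprod
  have hnum : x + (1-x)/(1+x) = (1+x^2)/(1+x) := by
    field_simp; ring
  have hden : 1 - x * ((1-x)/(1+x)) = (1+x^2)/(1+x) := by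
    field_simp; ring
  rw [hnum, hden, div_self (ne_of_gt (by positivity : (0:ℝ) < (1+x^2)/(1+x))),
    Real.arctan_one] at h
  linarith

set_option maxHeartbeats 1000000 in
private lemma sector_deriv_nonpos {x : ℝ} (hx1 : 1 - 1 / Real.sqrt 3 < x) (hx2 : x < 1/2) :
    ∃ d ≤ 0, HasDerivAt (fun r : ℝ => 2 * (Real.sqrt (1 - 2 * r) +
        r * (2 * Real.arctan (Real.sqrt (4 * (1 - r) ^ 2 - 1))
          - Real.arccos (r / (1 - r))))) d x := by
  have h3p : (0:ℝ) < Real.sqrt 3 := Real.sqrt_pos.mpr (by norm_num)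
  have h3 : (Real.sqrt 3)^2 = 3 := Real.sq_sqrt (by norm_num)
  have h3lb : (1.732:ℝ) < Real.sqrt 3 := by nlinarith
  have hx0 : (0.42:ℝ) < x := by
    have h58 : 1 / Real.sqrt 3 < 0.58 := by
      rw [div_lt_iff₀ h3p]; nlinarith
    linarith
  have h2x : (0:ℝ) < 1 - 2*x := by linarith
  have h1x : (0:ℝ) < 1 - x := by linarith
  have h1xs : 1 - x < 1 / Real.sqrt 3 := by linarith
  have h1xsq : (1-x)^2 < 1/3 := by
    have hkey : (1-x)*(1-x) < (1/Real.sqrt 3)*(1/Real.sqrt 3) :=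
      mul_lt_mul'' h1xs h1xs h1x.le h1x.le
    have h13 : 1 / Real.sqrt 3 * (1 / Real.sqrt 3) = 1/3 := by
      rw [div_mul_div_comm, one_mul]
      rw [show Real.sqrt 3 * Real.sqrt 3 = 3 from by nlinarith]
    nlinarith
  have ht2pos : (0:ℝ) < 4*(1-x)^2 - 1 := by nlinarith
  have hsp : (0:ℝ) < Real.sqrt (1 - 2*x) := Real.sqrt_pos.mpr h2x
  have hs : (Real.sqrt (1 - 2*x))^2 = 1 - 2*x := Real.sq_sqrt h2x.le
  have htp : (0:ℝ) < Real.sqrt (4*(1-x)^2 - 1) := Real.sqrt_pos.mpr ht2pos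
  have ht : (Real.sqrt (4*(1-x)^2 - 1))^2 = 4*(1-x)^2 - 1 := Real.sq_sqrt ht2pos.le
  set s := Real.sqrt (1 - 2*x) with hs_def
  set t := Real.sqrt (4*(1-x)^2 - 1) with ht_def
  have hu1 : x/(1-x) < 1 := by rw [div_lt_one h1x]; linarith
  have hu0 : 0 < x/(1-x) := div_pos (by linarith) h1x
  -- sqrt (1 - u^2) = s / (1-x)
  have hw : Real.sqrt (1 - (x/(1-x))^2) = s/(1-x) := by
    rw [show (1 - (x/(1-x))^2) = (1-2*x)/(1-x)^2 from by field_simp; ring,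
      Real.sqrt_div h2x.le, Real.sqrt_sq h1x.le]
  -- derivatives
  have d1 : HasDerivAt (fun r : ℝ => 1 - 2*r) (-2) x := by
    simpa using ((hasDerivAt_id x).const_mul (2:ℝ)).const_sub 1
  have dS : HasDerivAt (fun r : ℝ => Real.sqrt (1 - 2*r)) (-2/(2*s)) x :=
    d1.sqrt (ne_of_gt h2x)
  have d2 : HasDerivAt (fun r : ℝ => 4*(1-r)^2 - 1) (-8*(1-x)) x := by
    have h := ((((hasDerivAt_id x).const_sub 1).pow 2).const_mul (4:ℝ)).sub_const 1
    refine h.congr_deriv ?_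
    push_cast
    simp only [id_eq]
    ring
  have dT : HasDerivAt (fun r : ℝ => Real.sqrt (4*(1-r)^2 - 1)) ((-8*(1-x))/(2*t)) x :=
    d2.sqrt (ne_of_gt ht2pos)
  have dA : HasDerivAt (fun r : ℝ => Real.arctan (Real.sqrt (4*(1-r)^2 - 1)))
      (1/(1+t^2) * ((-8*(1-x))/(2*t))) x := dT.arctan
  have dU : HasDerivAt (fun r : ℝ => r/(1-r)) ((1*(1-x) - x*(-1))/(1-x)^2) x :=
    (hasDerivAt_id x).div ((hasDerivAt_id x).const_sub 1) (ne_of_gt h1x)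
  have dC : HasDerivAt (fun r : ℝ => Real.arccos (r/(1-r)))
      (-(1/(s/(1-x))) * ((1*(1-x) - x*(-1))/(1-x)^2)) x := by
    have h := (Real.hasDerivAt_arccos (by intro h; rw [h] at hu0; norm_num at hu0)
      (ne_of_lt hu1)).comp x dU
    rw [hw] at h
    exact h
  have dInner : HasDerivAt (fun r : ℝ => 2 * Real.arctan (Real.sqrt (4*(1-r)^2-1))
        - Real.arccos (r/(1-r)))
      (2 * (1/(1+t^2) * ((-8*(1-x))/(2*t)))
        - (-(1/(s/(1-x))) * ((1*(1-x) - x*(-1))/(1-x)^2))) x := (dA.const_mul 2).sub dC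
  have dMul : HasDerivAt (fun r : ℝ => r * (2 * Real.arctan (Real.sqrt (4*(1-r)^2-1))
        - Real.arccos (r/(1-r))))
      (1 * (2 * Real.arctan t - Real.arccos (x/(1-x)))
        + x * (2 * (1/(1+t^2) * ((-8*(1-x))/(2*t)))
          - (-(1/(s/(1-x))) * ((1*(1-x) - x*(-1))/(1-x)^2)))) x := by
    have h := (hasDerivAt_id x).mul dInner
    exact h
  have dF : HasDerivAt (fun r : ℝ => 2 * (Real.sqrt (1 - 2 * r) +
        r * (2 * Real.arctan (Real.sqrt (4 * (1 - r) ^ 2 - 1))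
          - Real.arccos (r / (1 - r)))))
      (2 * ((-2/(2*s)) + (1 * (2 * Real.arctan t - Real.arccos (x/(1-x)))
        + x * (2 * (1/(1+t^2) * ((-8*(1-x))/(2*t)))
          - (-(1/(s/(1-x))) * ((1*(1-x) - x*(-1))/(1-x)^2)))))) x :=
    (dS.add dMul).const_mul 2
  refine ⟨_, ?_, dF⟩
  -- now show the derivative value is ≤ 0
  have hAt : Real.arctan t ≤ t := my_arctan_le_self htp.le
  have ht13 : t^2 ≤ 1/3 := by rw [ht]; nlinarith
  have htle : t ≤ 0.578 := by nlinarith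
  have hsle : s ≤ 0.394 := by
    have h1 : (1.1548:ℝ)*Real.sqrt 3 > 2 := by nlinarith
    have h2 : 2/Real.sqrt 3 < 1.1548 := by rw [div_lt_iff₀ h3p]; linarith
    have h3' : 1 - 2*x < 2/Real.sqrt 3 - 1 := by
      have : 2 * (1/Real.sqrt 3) = 2/Real.sqrt 3 := by ring
      nlinarith [hx1]
    nlinarith
  have hCpos : 0 ≤ Real.arccos (x/(1-x)) := Real.arccos_nonneg _
  have hts : t ≤ 2*s := by nlinarith
  have hVeq : 2 * ((-2/(2*s)) + (1 * (2 * Real.arctan t - Real.arccos (x/(1-x)))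
        + x * (2 * (1/(1+t^2) * ((-8*(1-x))/(2*t)))
          - (-(1/(s/(1-x))) * ((1*(1-x) - x*(-1))/(1-x)^2)))))
      = 2 * (-(1/s) + 2 * Real.arctan t - Real.arccos (x/(1-x))
          + (x/((1-x)*s*t)) * (t - 2*s)) := by
    rw [show (1:ℝ)+t^2 = 4*(1-x)^2 from by rw [ht]; ring]
    field_simp
    ring
  rw [hVeq]
  have hlast : (x/((1-x)*s*t)) * (t - 2*s) ≤ 0 :=
    mul_nonpos_of_nonneg_of_nonpos (by positivity) (by linarith)
  have hinv : (2.5:ℝ) ≤ 1/s := by rw [le_div_iff₀ hsp]; nlinarith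
  linarith [hAt, htle, hCpos, hlast, hinv]

/-- The sector-length lower bound function
`r ↦ 2(√(1−2r) + r(2 arctan √(4(1−r)²−1) − arccos(r/(1−r))))`
is at least `0.9926` for `r ∈ [1−1/√3, 0.4302]`, and is decreasing
on `[1−1/√3, 1/2]`. -/
theorem sector_bound_function_props :
    (∀ r : ℝ, 1 - 1 / Real.sqrt 3 ≤ r → r ≤ 0.4302 →
      0.9926 ≤ 2 * (Real.sqrt (1 - 2 * r) +
        r * (2 * Real.arctan (Real.sqrt (4 * (1 - r) ^ 2 - 1))
          - Real.arccos (r / (1 - r))))) ∧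
    AntitoneOn (fun r : ℝ => 2 * (Real.sqrt (1 - 2 * r) +
        r * (2 * Real.arctan (Real.sqrt (4 * (1 - r) ^ 2 - 1))
          - Real.arccos (r / (1 - r)))))
      (Set.Icc (1 - 1 / Real.sqrt 3) (1 / 2)) := by
  have h3p : (0:ℝ) < Real.sqrt 3 := Real.sqrt_pos.mpr (by norm_num)
  have h3 : (Real.sqrt 3)^2 = 3 := Real.sq_sqrt (by norm_num)
  have h3lb : (1.732:ℝ) < Real.sqrt 3 := by nlinarith
  have h3ub : Real.sqrt 3 < 1.7321 := by nlinarith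
  have ha1 : (0.42:ℝ) < 1 - 1 / Real.sqrt 3 := by
    have : 1 / Real.sqrt 3 < 0.58 := by rw [div_lt_iff₀ h3p]; nlinarith
    linarith
  have ha2 : 1 - 1 / Real.sqrt 3 < 0.4227 := by
    have : (0.5773:ℝ) < 1 / Real.sqrt 3 := by rw [lt_div_iff₀ h3p]; nlinarith
    linarith
  have hanti : AntitoneOn (fun r : ℝ => 2 * (Real.sqrt (1 - 2 * r) +
        r * (2 * Real.arctan (Real.sqrt (4 * (1 - r) ^ 2 - 1))
          - Real.arccos (r / (1 - r)))))
      (Set.Icc (1 - 1 / Real.sqrt 3) (1 / 2)) := by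
    apply antitoneOn_of_deriv_nonpos (convex_Icc _ _)
    · -- continuity
      apply ContinuousOn.mul continuousOn_const
      apply ContinuousOn.add
      · exact (by fun_prop : Continuous fun r:ℝ => Real.sqrt (1-2*r)).continuousOn
      · apply ContinuousOn.mul continuousOn_id
        apply ContinuousOn.sub
        · exact (continuous_const.mul (Real.continuous_arctan.comp
            (Real.continuous_sqrt.comp (by fun_prop)))).continuousOn
        · apply Real.continuous_arccos.comp_continuousOn
          apply ContinuousOn.div continuousOn_id (by fun_prop)
          intro y hy h
          have h' : (1:ℝ) - y = 0 := h
          have h2 := hy.2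
          norm_num at h2
          linarith
    · rw [interior_Icc]
      intro y hy
      obtain ⟨d, _, hdF⟩ := sector_deriv_nonpos hy.1 hy.2
      exact hdF.differentiableAt.differentiableWithinAt
    · rw [interior_Icc]
      intro y hy
      obtain ⟨d, hd0, hdF⟩ := sector_deriv_nonpos hy.1 hy.2
      rw [hdF.deriv]
      exact hd0
  refine ⟨?_, hanti⟩
  intro r hr1 hr2
  have hmem1 : r ∈ Set.Icc (1 - 1 / Real.sqrt 3) (1/2) := ⟨hr1, by norm_num at hr2 ⊢; linarith⟩
  have hmem2 : (0.4302:ℝ) ∈ Set.Icc (1 - 1 / Real.sqrt 3) (1/2) := ⟨by linarith, by norm_num⟩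
  have hkey := hanti hmem1 hmem2 hr2
  simp only at hkey
  have hval : (0.9926:ℝ) ≤ 2 * (Real.sqrt (1 - 2 * 0.4302) +
      0.4302 * (2 * Real.arctan (Real.sqrt (4 * (1 - 0.4302) ^ 2 - 1))
        - Real.arccos (0.4302 / (1 - 0.4302)))) := by
    have hS : (0.3736308:ℝ) ≤ Real.sqrt (1 - 2 * 0.4302) :=
      (Real.le_sqrt (by norm_num) (by norm_num)).mpr (by norm_num)
    have hT1 : (0.5465237:ℝ) ≤ Real.sqrt (4 * (1 - 0.4302) ^ 2 - 1) :=
      (Real.le_sqrt (by norm_num) (by norm_num)).mpr (by norm_num)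
    have hTlt1 : Real.sqrt (4 * (1 - (0.4302:ℝ)) ^ 2 - 1) < 1 :=
      (Real.sqrt_lt' (by norm_num)).mpr (by norm_num)
    have hT0 : 0 < Real.sqrt (4 * (1 - (0.4302:ℝ)) ^ 2 - 1) :=
      Real.sqrt_pos.mpr (by norm_num)
    set T := Real.sqrt (4 * (1 - (0.4302:ℝ)) ^ 2 - 1) with hT_def
    have hd1ub : (1 - T)/(1 + T) ≤ 0.29322299 := by
      rw [div_le_iff₀ (by positivity)]
      nlinarith [hT1]
    have hA_ub : Real.arctan ((1 - T)/(1 + T))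
        ≤ 0.29322299 - 0.29322299^3/3 + 0.29322299^5/5 :=
      le_trans (Real.arctan_strictMono.monotone hd1ub) (my_arctan_upper (by norm_num))
    have hA : Real.pi/4 - (0.29322299 - 0.29322299^3/3 + 0.29322299^5/5)
        ≤ Real.arctan T := by
      rw [my_arctan_compl hT0 hTlt1]
      linarith
    -- arccos part
    have hu0 : (0:ℝ) < 0.4302 / (1 - 0.4302) := by norm_num
    have hC_eq : Real.arccos ((0.4302:ℝ) / (1 - 0.4302))
        = Real.arctan (Real.sqrt (1 - ((0.4302:ℝ)/(1 - 0.4302))^2) / ((0.4302:ℝ)/(1 - 0.4302))) :=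
      Real.arccos_eq_arctan hu0
    set Q := Real.sqrt (1 - ((0.4302:ℝ)/(1 - 0.4302))^2) / ((0.4302:ℝ)/(1 - 0.4302)) with hQ_def
    have hq_ub : Q ≤ 0.868505 := by
      rw [hQ_def, div_le_iff₀ hu0]
      have h1 : Real.sqrt (1 - ((0.4302:ℝ)/(1 - 0.4302))^2)
          ≤ Real.sqrt ((0.868505 * ((0.4302:ℝ)/(1 - 0.4302)))^2) :=
        Real.sqrt_le_sqrt (by norm_num)
      rwa [Real.sqrt_sq (by norm_num)] at h1
    have hq0 : 0 < Q := div_pos (Real.sqrt_pos.mpr (by norm_num)) hu0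
    have hq1 : Q < 1 := lt_of_le_of_lt hq_ub (by norm_num)
    have hd2lb : (0.07037444:ℝ) ≤ (1 - Q)/(1 + Q) := by
      rw [le_div_iff₀ (by positivity)]
      nlinarith [hq_ub]
    have hd2_atan : (0.07037444:ℝ) - 0.07037444^3/3 ≤ Real.arctan ((1 - Q)/(1 + Q)) :=
      le_trans (my_arctan_lower (by norm_num)) (Real.arctan_strictMono.monotone hd2lb)
    have hC_ub : Real.arccos ((0.4302:ℝ) / (1 - 0.4302))
        ≤ Real.pi/4 - (0.07037444 - 0.07037444^3/3) := by
      rw [hC_eq, my_arctan_compl hq0 hq1]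
      linarith
    have hpi : (3.141592:ℝ) < Real.pi := Real.pi_gt_d6
    nlinarith [hS, hA, hC_ub, hpi]
  linarith
end
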